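/- Let A₁, A₂ be n×n real matrices, C a p×n real matrix, τ₁ > 0, and let O₁ = col(C, C A₁, …, C A₁^{n−1}) and O₂ = col(C, C A₂, …, C A₂^{n−1}) be the observability matrices of (A₁, C) and (A₂, C). Then for x₀ ∈ ℝ^n, the switched output vanishes identically — i.e., C · exp(t A₁) · x₀ = 0 for all t ∈ [0, τ₁] and C · exp(s A₂) · exp(τ₁ A₁) · x₀ = 0 for all s ≥ 0 — if and only if x₀ ∈ ker(O₁) and exp(τ₁ A₁) x₀ ∈ ker(O₂); equivalently x₀ ∈ ker(O₁) ∩ ker(O₂ · exp(τ₁ A₁)). -/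

import Mathlib

open Matrix NormedSpace

attribute [local instance] Matrix.linftyOpNormedAddCommGroup Matrix.linftyOpNormedSpace
  Matrix.linftyOpNormedRing Matrix.linftyOpNormedAlgebra

noncomputable def obsCLM {n p : ℕ} (C : Matrix (Fin p) (Fin n) ℝ) (x : Fin n → ℝ) :
    Matrix (Fin n) (Fin n) ℝ →L[ℝ] (Fin p → ℝ) :=
  LinearMap.toContinuousLinearMap
    { toFun := fun M => C.mulVec (M.mulVec x)
      map_add' := fun M N => by simp [Matrix.add_mulVec, Matrix.mulVec_add]
      map_smul' := fun c M => by
        simp [Matrix.smul_mulVec, Matrix.mulVec_smul] }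

lemma obsCLM_apply {n p : ℕ} (C : Matrix (Fin p) (Fin n) ℝ) (x : Fin n → ℝ)
    (M : Matrix (Fin n) (Fin n) ℝ) : obsCLM C x M = C.mulVec (M.mulVec x) := rfl

/-- Hard direction: if the output vanishes on an interval, all the Markov parameters vanish. -/
lemma vanish_on_Icc_pow {n p : ℕ} (A : Matrix (Fin n) (Fin n) ℝ)
    (C : Matrix (Fin p) (Fin n) ℝ) (x : Fin n → ℝ) {τ : ℝ} (hτ : 0 < τ)
    (h : ∀ t ∈ Set.Icc (0 : ℝ) τ, C.mulVec ((exp (t • A)).mulVec x) = 0) :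
    ∀ k : ℕ, C.mulVec ((A ^ k).mulVec x) = 0 := by
  have hd : ∀ (k : ℕ) (t : ℝ),
      HasDerivAt (fun u : ℝ => obsCLM (C * A ^ k) x (exp (u • A)))
        (obsCLM (C * A ^ k) x (A * exp (t • A))) t := fun k t =>
    (obsCLM (C * A ^ k) x).hasFDerivAt.comp_hasDerivAt t (hasDerivAt_exp_smul_const' A t)
  have hstep : ∀ (k : ℕ) (M : Matrix (Fin n) (Fin n) ℝ),
      obsCLM (C * A ^ k) x (A * M) = obsCLM (C * A ^ (k + 1)) x M := by
    intro k M
    simp only [obsCLM_apply, ← Matrix.mulVec_mulVec, pow_succ, pow_succ']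
  have claim : ∀ (k : ℕ), ∀ t ∈ Set.Icc (0 : ℝ) τ,
      obsCLM (C * A ^ k) x (exp (t • A)) = 0 := by
    intro k
    induction k with
    | zero =>
      intro t ht
      simpa [obsCLM_apply, Matrix.mulVec_mulVec] using h t ht
    | succ k ih =>
      have hIoo : ∀ t ∈ Set.Ioo (0 : ℝ) τ,
          obsCLM (C * A ^ (k + 1)) x (exp (t • A)) = 0 := by
        intro t ht
        have hev : (fun u : ℝ => obsCLM (C * A ^ k) x (exp (u • A))) =ᶠ[nhds t]
            fun _ => (0 : Fin p → ℝ) := by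
          filter_upwards [Ioo_mem_nhds ht.1 ht.2] with s hs
          exact ih s (Set.Ioo_subset_Icc_self hs)
        have h0 : HasDerivAt (fun _ : ℝ => (0 : Fin p → ℝ))
            (obsCLM (C * A ^ k) x (A * exp (t • A))) t :=
          (hd k t).congr_of_eventuallyEq hev.symm
        have := h0.unique (hasDerivAt_const t 0)
        rw [← hstep k, this]
      -- extend to the closed interval by continuity
      intro t ht
      have hcont : Continuous fun u : ℝ => obsCLM (C * A ^ (k + 1)) x (exp (u • A)) :=
        continuous_iff_continuousAt.2 fun u => (hd (k + 1) u).continuousAt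
      have hclosed : IsClosed {u : ℝ | obsCLM (C * A ^ (k + 1)) x (exp (u • A)) = 0} :=
        isClosed_eq hcont continuous_const
      have hsub : closure (Set.Ioo (0 : ℝ) τ) ⊆
          {u : ℝ | obsCLM (C * A ^ (k + 1)) x (exp (u • A)) = 0} :=
        closure_minimal hIoo hclosed
      rw [closure_Ioo hτ.ne] at hsub
      exact hsub ht
  intro k
  have := claim k 0 ⟨le_refl 0, hτ.le⟩
  simpa [obsCLM_apply, Matrix.mulVec_mulVec] using this

/-- Cayley–Hamilton: the first `n` Markov parameters determine all of them. -/
lemma all_pow_of_lt {n p : ℕ} (A : Matrix (Fin n) (Fin n) ℝ)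
    (C : Matrix (Fin p) (Fin n) ℝ) (x : Fin n → ℝ)
    (hk : ∀ k : ℕ, k < n → C.mulVec ((A ^ k).mulVec x) = 0) :
    ∀ k : ℕ, C.mulVec ((A ^ k).mulVec x) = 0 := by
  rcases Nat.eq_zero_or_pos n with hn | hn
  · subst hn
    intro k
    funext j
    simp [Matrix.mulVec, dotProduct]
  intro k
  have hobs : ∀ M, C.mulVec (M.mulVec x) = obsCLM C x M := fun _ => rfl
  rw [hobs, Matrix.pow_eq_aeval_mod_charpoly A k]
  set q := (Polynomial.X ^ k : Polynomial ℝ) %ₘ A.charpoly with hq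
  have hdeg : q.natDegree < n := by
    by_cases h0 : q = 0
    · simpa [h0] using hn
    · rw [Polynomial.natDegree_lt_iff_degree_lt h0]
      have := Polynomial.degree_modByMonic_lt (Polynomial.X ^ k : Polynomial ℝ)
        (A.charpoly_monic)
      rwa [A.charpoly_degree_eq_dim, Fintype.card_fin] at this
  rw [Polynomial.aeval_eq_sum_range' hdeg A, map_sum]
  refine Finset.sum_eq_zero fun i hi => ?_
  rw [_root_.map_smul]
  have : obsCLM C x (A ^ i) = 0 := hk i (Finset.mem_range.1 hi)
  rw [this, smul_zero]

/-- Easy direction: vanishing Markov parameters give vanishing output. -/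
lemma exp_vanish {n p : ℕ} (A : Matrix (Fin n) (Fin n) ℝ)
    (C : Matrix (Fin p) (Fin n) ℝ) (x : Fin n → ℝ)
    (hall : ∀ k : ℕ, C.mulVec ((A ^ k).mulVec x) = 0) (t : ℝ) :
    C.mulVec ((exp (t • A)).mulVec x) = 0 := by
  have hobs : ∀ M, C.mulVec (M.mulVec x) = obsCLM C x M := fun _ => rfl
  rw [hobs, exp_eq_tsum (𝕂 := ℝ)]
  have hsum : Summable fun k : ℕ => ((k.factorial : ℝ)⁻¹ : ℝ) • (t • A) ^ k :=
    expSeries_summable' (𝕂 := ℝ) (t • A)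
  rw [ContinuousLinearMap.map_tsum _ hsum]
  have : ∀ k : ℕ, obsCLM C x (((k.factorial : ℝ)⁻¹ : ℝ) • (t • A) ^ k) = 0 := by
    intro k
    rw [_root_.map_smul, smul_pow, _root_.map_smul]
    have : obsCLM C x (A ^ k) = 0 := hall k
    rw [this, smul_zero, smul_zero]
  simp only [this, tsum_zero]

theorem switched_output_vanishes_iff_kernels
    {n p : ℕ} (A1 A2 : Matrix (Fin n) (Fin n) ℝ) (C : Matrix (Fin p) (Fin n) ℝ)
    (τ1 : ℝ) (hτ1 : 0 < τ1) (x0 : Fin n → ℝ) :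
    ((∀ t ∈ Set.Icc (0 : ℝ) τ1, C.mulVec ((exp (t • A1)).mulVec x0) = 0) ∧
     (∀ s : ℝ, 0 ≤ s →
        C.mulVec ((exp (s • A2)).mulVec ((exp (τ1 • A1)).mulVec x0)) = 0)) ↔
    ((∀ k : ℕ, k < n → C.mulVec ((A1 ^ k).mulVec x0) = 0) ∧
     (∀ k : ℕ, k < n →
        C.mulVec ((A2 ^ k).mulVec ((exp (τ1 • A1)).mulVec x0)) = 0)) := by
  constructor
  · rintro ⟨h1, h2⟩
    refine ⟨fun k _ => vanish_on_Icc_pow A1 C x0 hτ1 h1 k, fun k _ => ?_⟩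
    exact vanish_on_Icc_pow A2 C _ one_pos
      (fun s hs => h2 s hs.1) k
  · rintro ⟨h1, h2⟩
    refine ⟨fun t _ => exp_vanish A1 C x0 (all_pow_of_lt A1 C x0 h1) t, fun s _ =>
      exp_vanish A2 C _ (all_pow_of_lt A2 C _ h2) s⟩
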